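/- Let c ∈ ℂ⁴ and define ψ₀ : ℝ³ → ℂ⁴ by ψ₀(x) = exp(e^{1−|x|}) c. Then all three integrals below are finite and equal: e² ∫_{ℝ³} |ψ₀(x)|² e^{−|x|} dx = e² ∫_{ℝ³} |((1+2S·L)ψ₀)(x)|² e^{−|x|} dx = ∫_{ℝ³} |−i Σ_{j=1}^3 α_j ∂_jψ₀(x)|² e^{|x|} dx. In particular, for c ≠ 0, ψ₀ is a nonzero minimizer attaining equality in the weighted Hardy–Dirac inequality with m = 0 and weights ω = η = e^{|x|}. -/

import Mathlib

open MeasureTheory Real ComplexConjugate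
open scoped InnerProductSpace

noncomputable section

abbrev R3 := EuclideanSpace ℝ (Fin 3)
abbrev C4 := EuclideanSpace ℂ (Fin 4)

/-- The Pauli matrices. -/
def pauli : Fin 3 → Matrix (Fin 2) (Fin 2) ℂ
  | 0 => !![0, 1; 1, 0]
  | 1 => !![0, -Complex.I; Complex.I, 0]
  | 2 => !![1, 0; 0, -1]

/-- Reindex a 2×2 block matrix as a 4×4 matrix. -/
def blocks4 (A B C D : Matrix (Fin 2) (Fin 2) ℂ) : Matrix (Fin 4) (Fin 4) ℂ :=
  Matrix.reindex finSumFinEquiv finSumFinEquiv (Matrix.fromBlocks A B C D)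

/-- The Dirac alpha matrices. -/
def diracAlpha (j : Fin 3) : Matrix (Fin 4) (Fin 4) ℂ :=
  blocks4 0 (pauli j) (pauli j) 0

/-- The Dirac beta matrix. -/
def diracBeta : Matrix (Fin 4) (Fin 4) ℂ :=
  blocks4 1 0 0 (-1)

/-- The spin matrices Sⱼ. -/
def spinS (j : Fin 3) : Matrix (Fin 4) (Fin 4) ℂ :=
  (1/2 : ℂ) • blocks4 (pauli j) 0 0 (pauli j)

/-- Action of a 4×4 complex matrix on ℂ⁴. -/
def act (M : Matrix (Fin 4) (Fin 4) ℂ) (v : C4) : C4 :=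
  WithLp.toLp 2 (M.mulVec v)

/-- Partial derivative of a ℂ⁴-valued function on ℝ³. -/
def pderiv3 (j : Fin 3) (ψ : R3 → C4) (x : R3) : C4 :=
  fderiv ℝ ψ x (EuclideanSpace.single j 1)

/-- The free Dirac operator with mass m. -/
def diracOp (m : ℝ) (ψ : R3 → C4) (x : R3) : C4 :=
  (-Complex.I) • ∑ j, act (diracAlpha j) (pderiv3 j ψ x) + (m : ℂ) • act diracBeta (ψ x)

/-- The massless Dirac operator `-iα·∇`. -/
def masslessDirac (ψ : R3 → C4) (x : R3) : C4 :=
  (-Complex.I) • ∑ j, act (diracAlpha j) (pderiv3 j ψ x)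

/-- The orbital angular momentum component Lⱼψ = −i (x × ∇ψ)ⱼ. -/
def orbL (j : Fin 3) (ψ : R3 → C4) (x : R3) : C4 :=
  (-Complex.I) • ((x (j + 1) : ℂ) • pderiv3 (j + 2) ψ x - (x (j + 2) : ℂ) • pderiv3 (j + 1) ψ x)

/-- The spin-orbit operator (1 + 2 S·L). -/
def spinOrbit (ψ : R3 → C4) (x : R3) : C4 :=
  ψ x + (2 : ℂ) • ∑ j, act (spinS j) (orbL j ψ x)

/-- The radial derivative of a scalar function on ℝ³. -/
def radialDeriv (f : R3 → ℝ) (x : R3) : ℝ :=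
  ∑ j, (x j / ‖x‖) * fderiv ℝ f x (EuclideanSpace.single j 1)

/-- The radial derivative of a ℂ⁴-valued function on ℝ³. -/
def radialDerivV (ψ : R3 → C4) (x : R3) : C4 :=
  ∑ j, ((x j / ‖x‖ : ℝ) : ℂ) • pderiv3 j ψ x

/-- α·x̂, the Dirac matrix contracted with the unit radial vector. -/
def alphaHat (x : R3) : Matrix (Fin 4) (Fin 4) ℂ :=
  ∑ j, ((x j / ‖x‖ : ℝ) : ℂ) • diracAlpha j

/-- A function on ℝ³ is radial if it depends only on the norm of its argument. -/
def IsRadial {E : Type*} (f : R3 → E) : Prop :=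
  ∀ x y : R3, ‖x‖ = ‖y‖ → f x = f y


/-! ### Auxiliary lemmas -/

section Aux

lemma diracAlpha0 : diracAlpha 0 = !![0,0,0,1; 0,0,1,0; 0,1,0,0; 1,0,0,0] := by
  ext i k
  fin_cases i <;> fin_cases k <;>
    simp [diracAlpha, blocks4, pauli, Matrix.fromBlocks, finSumFinEquiv] <;> rfl

lemma diracAlpha1 : diracAlpha 1 =
    !![0,0,0,-Complex.I; 0,0,Complex.I,0; 0,-Complex.I,0,0; Complex.I,0,0,0] := by
  ext i k
  fin_cases i <;> fin_cases k <;>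
    simp [diracAlpha, blocks4, pauli, Matrix.fromBlocks, finSumFinEquiv] <;> rfl

lemma diracAlpha2 : diracAlpha 2 = !![0,0,1,0; 0,0,0,-1; 1,0,0,0; 0,-1,0,0] := by
  ext i k
  fin_cases i <;> fin_cases k <;>
    simp [diracAlpha, blocks4, pauli, Matrix.fromBlocks, finSumFinEquiv] <;> rfl

lemma mulVec0 (c : C4) : act (diracAlpha 0) c = ![c 3, c 2, c 1, c 0] := by
  funext i
  fin_cases i <;>
  · show Matrix.mulVec (n := Fin 4) _ _ _ = _
    simp [diracAlpha0, Matrix.mulVec, dotProduct, Fin.sum_univ_four]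

lemma mulVec1 (c : C4) : act (diracAlpha 1) c
    = ![-(Complex.I * c 3), Complex.I * c 2, -(Complex.I * c 1), Complex.I * c 0] := by
  funext i
  fin_cases i <;>
  · show Matrix.mulVec (n := Fin 4) _ _ _ = _
    simp [diracAlpha1, Matrix.mulVec, dotProduct, Fin.sum_univ_four]

lemma mulVec2 (c : C4) : act (diracAlpha 2) c = ![c 2, -c 3, c 0, -c 1] := by
  funext i
  fin_cases i <;>
  · show Matrix.mulVec (n := Fin 4) _ _ _ = _
    simp [diracAlpha2, Matrix.mulVec, dotProduct, Fin.sum_univ_four]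

lemma alpha_norm (u : Fin 3 → ℝ) (hu : u 0 ^ 2 + u 1 ^ 2 + u 2 ^ 2 = 1) (c : C4) :
    ‖(∑ j, (u j : ℂ) • act (diracAlpha j) c : C4)‖ = ‖c‖ := by
  rw [Fin.sum_univ_three, EuclideanSpace.norm_eq, EuclideanSpace.norm_eq]
  congr 1
  rw [Fin.sum_univ_four, Fin.sum_univ_four]
  simp only [PiLp.add_apply, PiLp.smul_apply, mulVec0, mulVec1, mulVec2,
    Matrix.cons_val_zero, Matrix.cons_val_one, Matrix.head_cons, smul_eq_mul,
    Matrix.cons_val_two, Matrix.tail_cons, Matrix.cons_val_three]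
  simp only [Complex.sq_norm, Complex.normSq_apply, Complex.add_re,
    Complex.add_im, Complex.mul_re, Complex.mul_im, Complex.ofReal_re, Complex.ofReal_im,
    Complex.neg_re, Complex.neg_im, Complex.I_re, Complex.I_im]
  ring_nf
  nlinarith [hu]

lemma act_smul (M : Matrix (Fin 4) (Fin 4) ℂ) (k : ℂ) (v : C4) :
    act M (k • v) = k • act M v := by
  ext i
  show Matrix.mulVec (n := Fin 4) _ _ _ = _
  have : (k • act M v) i = k * Matrix.mulVec M v i := rfl
  rw [this]
  simp only [Matrix.mulVec, dotProduct, Finset.mul_sum]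
  refine Finset.sum_congr rfl fun l _ => ?_
  have : (k • v : C4) l = k * v l := rfl
  rw [this]; ring

lemma act_zero (M : Matrix (Fin 4) (Fin 4) ℂ) : act M (0 : C4) = 0 := by
  ext i
  show Matrix.mulVec M (0 : Fin 4 → ℂ) i = (0 : Fin 4 → ℂ) i
  rw [Matrix.mulVec_zero]

lemma hasFDerivAt_norm3 (x : R3) (hx : x ≠ 0) :
    HasFDerivAt (fun y : R3 => ‖y‖) (‖x‖⁻¹ • innerSL ℝ x) x := by
  have hx' : ‖x‖ ≠ 0 := norm_ne_zero_iff.mpr hx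
  have h2 := (Real.hasDerivAt_sqrt (show (‖x‖ ^ 2 : ℝ) ≠ 0 by positivity)).comp_hasFDerivAt x
    (hasStrictFDerivAt_norm_sq x).hasFDerivAt
  have h2' : HasFDerivAt (fun y : R3 => Real.sqrt (‖y‖ ^ 2))
      ((1 / (2 * Real.sqrt (‖x‖ ^ 2))) • ((2 : ℕ) • innerSL ℝ x)) x := h2
  have hfun : (fun y : R3 => Real.sqrt (‖y‖ ^ 2)) = fun y : R3 => ‖y‖ :=
    funext fun y => Real.sqrt_sq (norm_nonneg y)
  rw [hfun] at h2'
  have hmap : (1 / (2 * Real.sqrt (‖x‖ ^ 2))) • ((2 : ℕ) • innerSL ℝ x) =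
      ‖x‖⁻¹ • innerSL ℝ x := by
    ext v
    simp only [ContinuousLinearMap.coe_smul', Pi.smul_apply, smul_eq_mul,
      Real.sqrt_sq (norm_nonneg x)]
    push_cast
    field_simp
    ring
  rwa [hmap] at h2'

lemma psi_hasFDerivAt (c : C4) (x : R3) (hx : x ≠ 0) :
    HasFDerivAt (fun y : R3 => (Real.exp (Real.exp (1 - ‖y‖)) : ℂ) • c)
      (((Complex.ofRealCLM.comp
        ((Real.exp (Real.exp (1 - ‖x‖))) • ((Real.exp (1 - ‖x‖)) •
          (-(‖x‖⁻¹ • innerSL ℝ x))))).smulRight c)) x := by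
  have hn := hasFDerivAt_norm3 x hx
  have h1 : HasFDerivAt (fun y : R3 => 1 - ‖y‖) (-(‖x‖⁻¹ • innerSL ℝ x)) x :=
    hn.const_sub 1
  have h2 : HasFDerivAt (fun y : R3 => Real.exp (1 - ‖y‖))
      ((Real.exp (1 - ‖x‖)) • (-(‖x‖⁻¹ • innerSL ℝ x))) x :=
    by have := (Real.hasDerivAt_exp (1 - ‖x‖)).comp_hasFDerivAt x h1; exact this
  have h3 : HasFDerivAt (fun y : R3 => Real.exp (Real.exp (1 - ‖y‖)))
      ((Real.exp (Real.exp (1 - ‖x‖))) • ((Real.exp (1 - ‖x‖)) •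
        (-(‖x‖⁻¹ • innerSL ℝ x)))) x :=
    by have := (Real.hasDerivAt_exp (Real.exp (1 - ‖x‖))).comp_hasFDerivAt x h2; exact this
  have h4 := Complex.ofRealCLM.hasFDerivAt.comp x h3
  exact h4.smul_const c

lemma psi_pderiv (c : C4) (x : R3) (hx : x ≠ 0) (j : Fin 3) :
    pderiv3 j (fun y : R3 => (Real.exp (Real.exp (1 - ‖y‖)) : ℂ) • c) x
      = ((-(Real.exp (Real.exp (1 - ‖x‖)) * Real.exp (1 - ‖x‖) * (x j / ‖x‖)) : ℝ) : ℂ) • c := by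
  rw [pderiv3, (psi_hasFDerivAt c x hx).fderiv]
  have hinner : (innerSL ℝ x) (EuclideanSpace.single j (1 : ℝ)) = x j := by
    simp [EuclideanSpace.inner_single_right]
  simp only [ContinuousLinearMap.smulRight_apply, ContinuousLinearMap.coe_comp',
    Function.comp_apply, ContinuousLinearMap.coe_smul', Pi.smul_apply,
    ContinuousLinearMap.neg_apply, hinner, smul_eq_mul]
  congr 1
  rw [Complex.ofRealCLM_apply]
  push_cast
  ring

lemma sq_sum_three (x : R3) :
    ‖x‖ ^ 2 = x 0 ^ 2 + x 1 ^ 2 + x 2 ^ 2 := by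
  rw [EuclideanSpace.norm_eq, Real.sq_sqrt (by positivity)]
  simp [Fin.sum_univ_three, sq_abs]

lemma pow4_le_exp (t : ℝ) (ht : 0 ≤ t) : t ^ 4 ≤ 256 * Real.exp t := by
  have h1 : t / 4 ≤ Real.exp (t / 4) := by linarith [Real.add_one_le_exp (t / 4)]
  have h2 : (t / 4) ^ 4 ≤ Real.exp (t / 4) ^ 4 := pow_le_pow_left₀ (by positivity) h1 4
  have h3 : Real.exp (t / 4) ^ 4 = Real.exp t := by
    rw [← Real.exp_nat_mul]; congr 1; push_cast; ring
  nlinarith [h2, h3]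

lemma integrable_exp_neg_norm3 : Integrable (fun x : R3 => Real.exp (-‖x‖)) := by
  have hdim : ((Module.finrank ℝ R3 : ℕ) : ℝ) < 4 := by
    simp [finrank_euclideanSpace_fin]; norm_num
  have h4 : Integrable (fun x : R3 => (1 + ‖x‖) ^ (-(4 : ℝ))) := integrable_one_add_norm hdim
  refine ((h4.const_mul (256 * Real.exp 1)).mono' ?_ ?_)
  · exact (Real.continuous_exp.comp continuous_norm.neg).aestronglyMeasurable
  · refine Filter.Eventually.of_forall fun x => ?_
    have hr : (0 : ℝ) ≤ ‖x‖ := norm_nonneg x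
    have h1 : (1 + ‖x‖) ^ (4 : ℕ) ≤ 256 * (Real.exp 1 * Real.exp ‖x‖) := by
      have := pow4_le_exp (1 + ‖x‖) (by linarith)
      rwa [Real.exp_add] at this
    have hpos : (0 : ℝ) < (1 + ‖x‖) ^ (4 : ℕ) := by positivity
    have hrw : (1 + ‖x‖) ^ (-(4 : ℝ)) = ((1 + ‖x‖) ^ (4 : ℕ))⁻¹ := by
      rw [Real.rpow_neg (by linarith), ← Real.rpow_natCast (1 + ‖x‖) 4]
      norm_num
    rw [Real.norm_eq_abs, abs_of_pos (Real.exp_pos _), hrw, Real.exp_neg]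
    have hE := Real.exp_pos ‖x‖
    nlinarith [mul_le_mul_of_nonneg_right h1
        (mul_nonneg (inv_nonneg.mpr hE.le) (inv_nonneg.mpr hpos.le)),
      mul_inv_cancel₀ hpos.ne', mul_inv_cancel₀ hE.ne',
      inv_nonneg.mpr hE.le, inv_nonneg.mpr hpos.le]

end Aux

/-- The explicit minimiser for the exponential weight in the massless case:
all three integrals are finite and equal. -/
theorem attained_exponential_weight (c : C4) (ψ₀ : R3 → C4)
    (hψ₀ : ∀ x : R3, ψ₀ x = (Real.exp (Real.exp (1 - ‖x‖)) : ℂ) • c) :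
    (Integrable (fun x : R3 => ‖ψ₀ x‖ ^ 2 * Real.exp (-‖x‖)) ∧
      Integrable (fun x : R3 => ‖spinOrbit ψ₀ x‖ ^ 2 * Real.exp (-‖x‖)) ∧
      Integrable (fun x : R3 => ‖masslessDirac ψ₀ x‖ ^ 2 * Real.exp ‖x‖)) ∧
    (Real.exp 1 ^ 2 * ∫ x : R3, ‖ψ₀ x‖ ^ 2 * Real.exp (-‖x‖) =
      Real.exp 1 ^ 2 * ∫ x : R3, ‖spinOrbit ψ₀ x‖ ^ 2 * Real.exp (-‖x‖)) ∧
    (Real.exp 1 ^ 2 * ∫ x : R3, ‖spinOrbit ψ₀ x‖ ^ 2 * Real.exp (-‖x‖) =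
      ∫ x : R3, ‖masslessDirac ψ₀ x‖ ^ 2 * Real.exp ‖x‖) ∧
    (c ≠ 0 → ψ₀ ≠ 0) := by
  have hψ : ψ₀ = fun y : R3 => (Real.exp (Real.exp (1 - ‖y‖)) : ℂ) • c := funext hψ₀
  subst hψ
  set ψ : R3 → C4 := fun y : R3 => (Real.exp (Real.exp (1 - ‖y‖)) : ℂ) • c with hψdef
  -- norm of ψ
  have hnormψ : ∀ x : R3, ‖ψ x‖ = Real.exp (Real.exp (1 - ‖x‖)) * ‖c‖ := by
    intro x
    rw [hψdef]
    rw [norm_smul, Complex.norm_real, Real.norm_eq_abs, abs_of_pos (Real.exp_pos _)]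
  -- spin-orbit term is trivial
  have horb : ∀ (j : Fin 3) (x : R3), orbL j ψ x = 0 := by
    intro j x
    by_cases hx : x = 0
    · subst hx
      have h1 : ((0 : R3) (j + 1) : ℂ) = 0 := by norm_num
      have h2 : ((0 : R3) (j + 2) : ℂ) = 0 := by norm_num
      rw [orbL, h1, h2, zero_smul, zero_smul, sub_zero, smul_zero]
    · rw [orbL, psi_pderiv c x hx, psi_pderiv c x hx, smul_smul, smul_smul, ← sub_smul]
      have hz : ((x (j + 1) : ℂ) *
            ((-(Real.exp (Real.exp (1 - ‖x‖)) * Real.exp (1 - ‖x‖) * (x (j + 2) / ‖x‖)) : ℝ) : ℂ) -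
          (x (j + 2) : ℂ) *
            ((-(Real.exp (Real.exp (1 - ‖x‖)) * Real.exp (1 - ‖x‖) * (x (j + 1) / ‖x‖)) : ℝ) : ℂ)) =
          0 := by
        push_cast
        ring
      rw [hz, zero_smul, smul_zero]
  have hso : ∀ x : R3, spinOrbit ψ x = ψ x := by
    intro x
    rw [spinOrbit]
    simp only [horb, act_zero, smul_zero, Finset.sum_const_zero, add_zero]
  -- massless Dirac norm
  have hmd : ∀ x : R3, x ≠ 0 →
      ‖masslessDirac ψ x‖ = Real.exp (1 - ‖x‖) * Real.exp (Real.exp (1 - ‖x‖)) * ‖c‖ := by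
    intro x hx
    have hr : ‖x‖ ≠ 0 := norm_ne_zero_iff.mpr hx
    have hterm : ∀ j : Fin 3, act (diracAlpha j) (pderiv3 j ψ x)
        = ((-(Real.exp (Real.exp (1 - ‖x‖)) * Real.exp (1 - ‖x‖)) : ℝ) : ℂ) •
            (((x j / ‖x‖ : ℝ) : ℂ) • act (diracAlpha j) c) := by
      intro j
      rw [psi_pderiv c x hx, act_smul, smul_smul]
      congr 1
      push_cast
      ring
    have hu : (fun j : Fin 3 => x j / ‖x‖) 0 ^ 2 + (fun j : Fin 3 => x j / ‖x‖) 1 ^ 2 +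
        (fun j : Fin 3 => x j / ‖x‖) 2 ^ 2 = 1 := by
      have hs := sq_sum_three x
      field_simp
      linarith [hs]
    have hsum : ∑ j, ((x j / ‖x‖ : ℝ) : ℂ) • act (diracAlpha j) c
        = (∑ j, ((fun j : Fin 3 => x j / ‖x‖) j : ℂ) • act (diracAlpha j) c : C4) := rfl
    rw [masslessDirac, Finset.sum_congr rfl fun j _ => hterm j, ← Finset.smul_sum,
      norm_smul, norm_smul, hsum, alpha_norm _ hu c]
    rw [Complex.norm_real, Real.norm_eq_abs, abs_neg,
      abs_of_pos (mul_pos (Real.exp_pos _) (Real.exp_pos _))]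
    rw [norm_neg, Complex.norm_I, one_mul]
    ring
  -- first integrand integrable
  have hcont : Continuous ψ :=
    ((Complex.continuous_ofReal.comp (Real.continuous_exp.comp (Real.continuous_exp.comp
      (continuous_const.sub continuous_norm)))).smul continuous_const)
  have hi1 : Integrable (fun x : R3 => ‖ψ x‖ ^ 2 * Real.exp (-‖x‖)) := by
    refine (integrable_exp_neg_norm3.const_mul ((Real.exp (Real.exp 1) * ‖c‖) ^ 2)).mono' ?_ ?_
    · exact ((hcont.norm.pow 2).mul (Real.continuous_exp.comp continuous_norm.neg)).aestronglyMeasurable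
    · refine Filter.Eventually.of_forall fun x => ?_
      have hΦ : Real.exp (Real.exp (1 - ‖x‖)) ≤ Real.exp (Real.exp 1) :=
        Real.exp_le_exp.2 (Real.exp_le_exp.2 (by linarith [norm_nonneg x]))
      rw [Real.norm_eq_abs, abs_of_nonneg (by positivity), hnormψ]
      gcongr
  -- pointwise identity relating the two weighted integrands
  have hkey : ∀ x : R3, x ≠ 0 → ‖masslessDirac ψ x‖ ^ 2 * Real.exp ‖x‖
      = Real.exp 1 ^ 2 * (‖ψ x‖ ^ 2 * Real.exp (-‖x‖)) := by
    intro x hx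
    rw [hmd x hx, hnormψ]
    have hE : Real.exp (1 - ‖x‖) ^ 2 * Real.exp ‖x‖ = Real.exp 1 ^ 2 * Real.exp (-‖x‖) := by
      rw [sq, sq, mul_assoc, ← Real.exp_add, ← Real.exp_add, mul_assoc, ← Real.exp_add,
        ← Real.exp_add]
      congr 1
      ring
    linear_combination (Real.exp (Real.exp (1 - ‖x‖)) * ‖c‖) ^ 2 * hE
  have hae : (fun x : R3 => ‖masslessDirac ψ x‖ ^ 2 * Real.exp ‖x‖)
      =ᵐ[volume] fun x : R3 => Real.exp 1 ^ 2 * (‖ψ x‖ ^ 2 * Real.exp (-‖x‖)) := by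
    have h0 : volume ({(0 : R3)} : Set R3) = 0 := measure_singleton _
    filter_upwards [compl_mem_ae_iff.mpr h0] with x hx
    exact hkey x (by simpa using hx)
  have hi3 : Integrable (fun x : R3 => ‖masslessDirac ψ x‖ ^ 2 * Real.exp ‖x‖) :=
    (hi1.const_mul (Real.exp 1 ^ 2)).congr hae.symm
  have hi2 : Integrable (fun x : R3 => ‖spinOrbit ψ x‖ ^ 2 * Real.exp (-‖x‖)) := by
    simpa only [hso] using hi1
  refine ⟨⟨hi1, hi2, hi3⟩, ?_, ?_, ?_⟩
  · congr 1
    refine integral_congr_ae (Filter.Eventually.of_forall fun x => ?_)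
    simp only [hso]
  · rw [integral_congr_ae hae, integral_const_mul]
    congr 1
    refine integral_congr_ae (Filter.Eventually.of_forall fun x => ?_)
    simp only [hso]
  · intro hc hzero
    apply hc
    have h0 : ψ 0 = 0 := by rw [hzero]; rfl
    rw [hψdef] at h0
    simp only [norm_zero, sub_zero] at h0
    rcases smul_eq_zero.mp h0 with h | h
    · exact absurd h (by simp [Real.exp_ne_zero])
    · exact h
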